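/- arXiv:1011.3880 — 4 statements merged into one kernel-verified Lean document; each statement's English description precedes it below -/
import Mathlib

section
/- Let F be a free group of finite rank t and let R be a normal subgroup of F generated as a normal subgroup by m elements, such that G = F/R is finite. Then the abelian group (R ∩ [F,F])/[R,F] is generated by at most m - t elements. In particular m ≥ t. -/
set_option maxHeartbeats 800000

open Subgroup Finsupp
open scoped commutatorElement IsMulCommutative

/-- A subgroup of `Multiplicative (ι →₀ ℤ)` containing all `single i 1` is everything. -/
private lemma aux_mult_top {ι : Type} (H : Subgroup (Multiplicative (ι →₀ ℤ)))
    (h : ∀ i, Multiplicative.ofAdd (Finsupp.single i (1 : ℤ)) ∈ H) : H = ⊤ := by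
  have hspan : Submodule.span ℤ (Set.range fun i : ι => Finsupp.single i (1 : ℤ)) = ⊤ := by
    have h1 := (Finsupp.basisSingleOne (R := ℤ) (ι := ι)).span_eq
    rwa [show Set.range ⇑(Finsupp.basisSingleOne (R := ℤ) (ι := ι)) =
        Set.range fun i : ι => Finsupp.single i (1 : ℤ) by rw [Finsupp.coe_basisSingleOne]] at h1
  have hcl : AddSubgroup.closure (Set.range fun i : ι => Finsupp.single i (1 : ℤ)) = ⊤ := by
    rw [← Submodule.span_int_eq_addSubgroupClosure, hspan]; rfl
  rw [eq_top_iff']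
  intro x
  have hx : Multiplicative.toAdd x ∈
      AddSubgroup.closure (Set.range fun i : ι => Finsupp.single i (1 : ℤ)) := by
    rw [hcl]; trivial
  have key : ∀ d : ι →₀ ℤ,
      d ∈ AddSubgroup.closure (Set.range fun i : ι => Finsupp.single i (1 : ℤ)) →
      Multiplicative.ofAdd d ∈ H := by
    intro d hd
    refine AddSubgroup.closure_induction (fun y hy => ?_) ?_ (fun y z _ _ hy hz => ?_)
      (fun y _ hy => ?_) hd
    · obtain ⟨i, rfl⟩ := hy; exact h i
    · exact H.one_mem
    · exact H.mul_mem hy hz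
    · exact H.inv_mem hy
  exact key _ hx

/-- The kernel of the canonical map from the free group to the free abelian group
is the commutator subgroup. -/
private lemma aux_ker (t : ℕ) :
    MonoidHom.ker (FreeGroup.lift fun i : Fin t =>
      Multiplicative.ofAdd (Finsupp.single i (1 : ℤ))) =
    ⁅(⊤ : Subgroup (FreeGroup (Fin t))), ⊤⁆ := by
  apply le_antisymm
  · intro x hx
    set θ := FreeGroup.lift fun i : Fin t => Multiplicative.ofAdd (Finsupp.single i (1 : ℤ))
      with hθ
    set δ : Multiplicative (Fin t →₀ ℤ) →* Abelianization (FreeGroup (Fin t)) :=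
      AddMonoidHom.toMultiplicativeLeft
        (Finsupp.liftAddHom fun i =>
          zmultiplesHom _ (Additive.ofMul (Abelianization.of (FreeGroup.of i)))) with hδ
    have hcomp : δ.comp θ = Abelianization.of := by
      apply FreeGroup.ext_hom
      intro i
      simp only [MonoidHom.comp_apply, hθ, FreeGroup.lift_apply_of, hδ]
      show Additive.toMul ((Finsupp.liftAddHom fun i =>
          zmultiplesHom _ (Additive.ofMul (Abelianization.of (FreeGroup.of i))))
          (Finsupp.single i (1 : ℤ))) = _
      rw [Finsupp.liftAddHom_apply_single]
      simp
    have hx1 : θ x = 1 := hx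
    have h2 : Abelianization.of x = 1 := by
      rw [← hcomp]
      show δ (θ x) = 1
      rw [hx1, map_one]
    exact (QuotientGroup.eq_one_iff x).mp h2
  · exact Abelianization.commutator_subset_ker _

/-- Let `F` be a free group of finite rank `t` and `R` a normal subgroup of `F`
which is the normal closure of `m` elements, such that `F/R` is finite.  Then
`m ≥ t`, and the abelian group `(R ∩ [F,F])/[R,F]` (viewed as the image of
`R ∩ [F,F]` in `F/[R,F]`) is generated by at most `m - t` elements. -/
theorem schur_multiplier_gen_bound (t m : ℕ)
    (S : Finset (FreeGroup (Fin t))) (hcard : S.card = m)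
    (R : Subgroup (FreeGroup (Fin t))) [R.Normal]
    (hR : R = Subgroup.normalClosure (S : Set (FreeGroup (Fin t))))
    (hfin : Finite (FreeGroup (Fin t) ⧸ R)) :
    t ≤ m ∧
      ∃ T : Finset (FreeGroup (Fin t) ⧸ ⁅R, (⊤ : Subgroup (FreeGroup (Fin t)))⁆),
        T.card ≤ m - t ∧
        Subgroup.closure (T : Set (FreeGroup (Fin t) ⧸ ⁅R, (⊤ : Subgroup (FreeGroup (Fin t)))⁆)) =
          (R ⊓ ⁅(⊤ : Subgroup (FreeGroup (Fin t))), ⊤⁆).map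
            (QuotientGroup.mk' ⁅R, (⊤ : Subgroup (FreeGroup (Fin t)))⁆) := by
  classical
  set π := QuotientGroup.mk' ⁅R, (⊤ : Subgroup (FreeGroup (Fin t)))⁆ with hπ
  set θ := FreeGroup.lift fun i : Fin t => Multiplicative.ofAdd (Finsupp.single i (1 : ℤ))
    with hθ
  have hθker : MonoidHom.ker θ = ⁅(⊤ : Subgroup (FreeGroup (Fin t))), ⊤⁆ := aux_ker t
  -- θ is surjective
  have hθsurj : Function.Surjective θ := by
    have : θ.range = ⊤ := aux_mult_top _ (fun i => ⟨FreeGroup.of i, FreeGroup.lift_apply_of⟩)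
    intro y
    have : y ∈ θ.range := this ▸ Subgroup.mem_top y
    exact this
  -- θ descends to the quotient
  have hQNle : ⁅R, (⊤ : Subgroup (FreeGroup (Fin t)))⁆ ≤ MonoidHom.ker θ := by
    rw [hθker]; exact Subgroup.commutator_mono le_top le_top
  set θbar := QuotientGroup.lift ⁅R, (⊤ : Subgroup (FreeGroup (Fin t)))⁆ θ hQNle with hθbar
  have hθbarπ : ∀ x, θbar (π x) = θ x := fun x => rfl
  -- elements of S belong to R
  have hSR : ∀ x ∈ S, x ∈ R := fun x hx => hR ▸ Subgroup.subset_normalClosure hx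
  -- the image of R is central in the quotient
  have hcentral : ∀ x ∈ R, π x ∈ Subgroup.center (FreeGroup (Fin t) ⧸ ⁅R, ⊤⁆) := by
    intro x hx
    rw [Subgroup.mem_center_iff]
    intro q
    obtain ⟨f, rfl⟩ := QuotientGroup.mk'_surjective _ q
    have hc : ⁅x, f⁆ ∈ ⁅R, (⊤ : Subgroup (FreeGroup (Fin t)))⁆ :=
      Subgroup.commutator_mem_commutator hx (Subgroup.mem_top f)
    have h1 : π ⁅x, f⁆ = 1 := by
      rw [← MonoidHom.mem_ker, QuotientGroup.ker_mk']; exact hc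
    rw [map_commutatorElement] at h1
    exact (commutatorElement_eq_one_iff_mul_comm.mp h1).symm
  -- an enumeration of S
  set s : Fin m → FreeGroup (Fin t) :=
    fun i => ((S.equivFin.symm (Fin.cast hcard.symm i)) : FreeGroup (Fin t)) with hs
  have hs_mem : ∀ i, s i ∈ S := fun i => (S.equivFin.symm _).2
  have hs_range : Set.range s = (S : Set (FreeGroup (Fin t))) := by
    ext x
    constructor
    · rintro ⟨i, rfl⟩; exact hs_mem i
    · intro hx
      refine ⟨Fin.cast hcard (S.equivFin ⟨x, hx⟩), ?_⟩
      simp [hs]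
  -- the central homomorphism Φ
  set cg : Fin m → Subgroup.center (FreeGroup (Fin t) ⧸ ⁅R, ⊤⁆) :=
    fun i => ⟨π (s i), hcentral _ (hSR _ (hs_mem i))⟩ with hcg
  set Φ : Multiplicative (Fin m →₀ ℤ) →* (FreeGroup (Fin t) ⧸ ⁅R, ⊤⁆) :=
    (Subgroup.center (FreeGroup (Fin t) ⧸ ⁅R, ⊤⁆)).subtype.comp
      (AddMonoidHom.toMultiplicativeLeft
        (Finsupp.liftAddHom fun i => zmultiplesHom _ (Additive.ofMul (cg i)))) with hΦ
  have hΦ_single : ∀ i, Φ (Multiplicative.ofAdd (Finsupp.single i (1 : ℤ))) = π (s i) := by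
    intro i
    simp only [hΦ, MonoidHom.comp_apply, AddMonoidHom.coe_toMultiplicativeLeft,
      Function.comp_apply]
    rw [show Multiplicative.toAdd (Multiplicative.ofAdd (Finsupp.single i (1 : ℤ))) =
      Finsupp.single i (1 : ℤ) from rfl]
    rw [Finsupp.liftAddHom_apply_single]
    simp [hcg]
  -- the range of Φ is the image of R
  have hA : Φ.range = R.map π := by
    have h1 : R.map π = Subgroup.normalClosure (π '' (S : Set (FreeGroup (Fin t)))) :=
      (congrArg (Subgroup.map π) hR).trans
        (Subgroup.map_normalClosure _ _ (QuotientGroup.mk'_surjective _))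
    have hC_le : Subgroup.closure (π '' (S : Set (FreeGroup (Fin t)))) ≤
        Subgroup.center (FreeGroup (Fin t) ⧸ ⁅R, ⊤⁆) := by
      rw [Subgroup.closure_le]
      rintro q ⟨x, hxS, rfl⟩
      exact hcentral x (hSR x hxS)
    have hCnormal : (Subgroup.closure (π '' (S : Set (FreeGroup (Fin t))))).Normal := by
      constructor
      intro n hn g
      have hgn : g * n = n * g := Subgroup.mem_center_iff.mp (hC_le hn) g
      rw [hgn, mul_inv_cancel_right]
      exact hn
    have h2 : Subgroup.normalClosure (π '' (S : Set (FreeGroup (Fin t)))) =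
        Subgroup.closure (π '' (S : Set (FreeGroup (Fin t)))) :=
      le_antisymm (Subgroup.normalClosure_le_normal Subgroup.subset_closure)
        ((Subgroup.closure_le _).mpr Subgroup.subset_normalClosure)
    have htop : (⊤ : Subgroup (Multiplicative (Fin m →₀ ℤ))) =
        Subgroup.closure (Set.range fun i : Fin m =>
          Multiplicative.ofAdd (Finsupp.single i (1 : ℤ))) :=
      (aux_mult_top _ (fun i => Subgroup.subset_closure (Set.mem_range_self i))).symm
    have h3 : Φ.range = Subgroup.closure (π '' (S : Set (FreeGroup (Fin t)))) := by
      rw [MonoidHom.range_eq_map, htop, MonoidHom.map_closure]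
      congr 1
      rw [← Set.range_comp]
      have : (⇑Φ ∘ fun i : Fin m => Multiplicative.ofAdd (Finsupp.single i (1 : ℤ))) =
          fun i => π (s i) := by
        funext i; exact hΦ_single i
      rw [this, show (fun i => π (s i)) = ⇑π ∘ s from rfl, Set.range_comp, hs_range]
    rw [h3, h1, h2]
  -- the associated linear map
  set Lmap : (Fin m →₀ ℤ) →ₗ[ℤ] (Fin t →₀ ℤ) :=
    (MonoidHom.toAdditive (θbar.comp Φ)).toIntLinearMap with hLmap
  have hLapp : ∀ d : Fin m →₀ ℤ,
      Lmap d = Multiplicative.toAdd (θbar (Φ (Multiplicative.ofAdd d))) := fun d => rfl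
  set N := LinearMap.range Lmap with hN
  -- the image of θ on R lands in N
  have hNmem : ∀ x ∈ R, Multiplicative.toAdd (θ x) ∈ N := by
    intro x hx
    have : π x ∈ Φ.range := by rw [hA]; exact Subgroup.mem_map_of_mem π hx
    obtain ⟨d, hd⟩ := this
    exact ⟨Multiplicative.toAdd d, by rw [hLapp]; simp [hd, hθbarπ]⟩
  -- finiteness of the quotient module
  have hQWfin : Finite ((Fin t →₀ ℤ) ⧸ N) := by
    set μ : FreeGroup (Fin t) →* Multiplicative ((Fin t →₀ ℤ) ⧸ N) :=
      (AddMonoidHom.toMultiplicative (N.mkQ.toAddMonoidHom)).comp θ with hμ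
    have hμker : R ≤ MonoidHom.ker μ := by
      intro x hx
      show Multiplicative.ofAdd (N.mkQ (Multiplicative.toAdd (θ x))) = 1
      have : N.mkQ (Multiplicative.toAdd (θ x)) = 0 := by
        rw [show N.mkQ (Multiplicative.toAdd (θ x)) =
          Submodule.Quotient.mk (Multiplicative.toAdd (θ x)) from rfl]
        rw [Submodule.Quotient.mk_eq_zero]
        exact hNmem x hx
      rw [this]; rfl
    have hμsurj : Function.Surjective μ := by
      intro y
      obtain ⟨w, hw⟩ := N.mkQ_surjective (Multiplicative.toAdd y)
      obtain ⟨x, hx⟩ := hθsurj (Multiplicative.ofAdd w)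
      exact ⟨x, by simp [hμ, hx, hw]⟩
    have h5 : Function.Surjective (QuotientGroup.lift R μ hμker) := by
      intro y
      obtain ⟨x, hx⟩ := hμsurj y
      exact ⟨QuotientGroup.mk x, hx⟩
    have : Finite (Multiplicative ((Fin t →₀ ℤ) ⧸ N)) := Finite.of_surjective _ h5
    exact this
  -- N has full rank
  have hrankN : Module.rank ℤ N = t := by
    set k := Nat.card ((Fin t →₀ ℤ) ⧸ N) with hk
    have hk0 : (k : ℤ) ≠ 0 := by
      have : 0 < k := Nat.card_pos
      exact_mod_cast this.ne'
    have hkmem : ∀ w : Fin t →₀ ℤ, ((k : ℤ) • LinearMap.id (R := ℤ)) w ∈ N := by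
      intro w
      have h0 : (k • (Submodule.Quotient.mk w : (Fin t →₀ ℤ) ⧸ N)) = 0 := card_nsmul_eq_zero'
      have : Submodule.Quotient.mk ((k : ℤ) • w) = (0 : (Fin t →₀ ℤ) ⧸ N) := by
        rw [Submodule.Quotient.mk_smul]
        rw [show ((k : ℤ) • (Submodule.Quotient.mk w : (Fin t →₀ ℤ) ⧸ N)) =
          k • (Submodule.Quotient.mk w : (Fin t →₀ ℤ) ⧸ N) from natCast_zsmul _ _]
        exact h0
      simpa using (Submodule.Quotient.mk_eq_zero N).mp this
    set ℓ : (Fin t →₀ ℤ) →ₗ[ℤ] N :=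
      LinearMap.codRestrict N ((k : ℤ) • LinearMap.id) hkmem with hℓ
    have hℓinj : Function.Injective ℓ := by
      intro a b hab
      have : (k : ℤ) • a = (k : ℤ) • b := congrArg Subtype.val hab
      exact smul_right_injective _ hk0 this
    have hge : (t : Cardinal) ≤ Module.rank ℤ N := by
      have h6 := LinearMap.rank_le_of_injective ℓ hℓinj
      rwa [rank_finsupp_self', Cardinal.mk_fin] at h6
    have hle : Module.rank ℤ N ≤ t := by
      have h7 := Submodule.rank_le N
      rwa [rank_finsupp_self', Cardinal.mk_fin] at h7
    exact le_antisymm hle hge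
  -- rank-nullity
  set K := LinearMap.ker Lmap with hK
  have hrn := LinearMap.rank_range_add_rank_ker Lmap
  rw [← hN, hrankN, rank_finsupp_self', Cardinal.mk_fin] at hrn
  haveI : Module.Finite ℤ (Fin m →₀ ℤ) := inferInstance
  haveI hKfin : Module.Finite ℤ K := Module.Finite.of_injective K.subtype Subtype.val_injective
  haveI hKfree : Module.Free ℤ K := inferInstance
  have hfr : (Module.finrank ℤ K : Cardinal) = Module.rank ℤ K := Module.finrank_eq_rank ℤ K
  rw [← hfr] at hrn
  have htm : t + Module.finrank ℤ K = m := by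
    have : ((t + Module.finrank ℤ K : ℕ) : Cardinal) = ((m : ℕ) : Cardinal) := by
      push_cast
      exact hrn
    exact_mod_cast this
  have htle : t ≤ m := by omega
  have hd : Module.finrank ℤ K = m - t := by omega
  refine ⟨htle, ?_⟩
  -- the generating set
  set b := Module.Free.chooseBasis ℤ K with hb
  set T : Finset (FreeGroup (Fin t) ⧸ ⁅R, ⊤⁆) :=
    Finset.image (fun i => Φ (Multiplicative.ofAdd ((b i : Fin m →₀ ℤ)))) Finset.univ with hT
  refine ⟨T, ?_, ?_⟩
  · calc T.card ≤ Finset.univ.card := Finset.card_image_le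
    _ = Fintype.card (Module.Free.ChooseBasisIndex ℤ K) := Finset.card_univ
    _ = Module.finrank ℤ K := (Module.finrank_eq_card_chooseBasisIndex ℤ K).symm
    _ = m - t := hd
  · -- K is spanned by b
    have hKspan : (K : Submodule ℤ (Fin m →₀ ℤ)) =
        Submodule.span ℤ (Set.range fun i => ((b i : Fin m →₀ ℤ))) := by
      apply le_antisymm
      · intro x hx
        have hmem : (⟨x, hx⟩ : K) ∈ (⊤ : Submodule ℤ K) := trivial
        rw [← b.span_eq] at hmem
        have : x ∈ Submodule.map K.subtype (Submodule.span ℤ (Set.range ⇑b)) :=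
          ⟨⟨x, hx⟩, hmem, rfl⟩
        rwa [Submodule.map_span, ← Set.range_comp] at this
      · rw [Submodule.span_le]
        rintro x ⟨i, rfl⟩
        exact (b i).2
    have hclosK : ∀ d : Fin m →₀ ℤ, d ∈ K →
        Φ (Multiplicative.ofAdd d) ∈ Subgroup.closure (T : Set _) := by
      intro d hdK
      have hd' : d ∈ AddSubgroup.closure (Set.range fun i => ((b i : Fin m →₀ ℤ))) := by
        rw [← Submodule.span_int_eq_addSubgroupClosure, ← hKspan]
        exact hdK
      refine AddSubgroup.closure_induction (fun y hy => ?_) ?_ (fun y z _ _ hy hz => ?_)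
        (fun y _ hy => ?_) hd'
      · obtain ⟨i, rfl⟩ := hy
        exact Subgroup.subset_closure
          (Finset.mem_coe.mpr (Finset.mem_image_of_mem _ (Finset.mem_univ i)))
      · rw [show Multiplicative.ofAdd (0 : Fin m →₀ ℤ) = 1 from rfl, map_one]
        exact Subgroup.one_mem _
      · rw [show Multiplicative.ofAdd (y + z) =
            Multiplicative.ofAdd y * Multiplicative.ofAdd z from rfl, map_mul]
        exact mul_mem hy hz
      · rw [show Multiplicative.ofAdd (-y) = (Multiplicative.ofAdd y)⁻¹ from rfl, map_inv]
        exact inv_mem hy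
    -- generators are in B
    apply le_antisymm
    · rw [Subgroup.closure_le]
      intro q hq
      rw [hT] at hq
      simp only [Finset.coe_image, Finset.coe_univ, Set.image_univ, Set.mem_range] at hq
      obtain ⟨i, rfl⟩ := hq
      have h8 : Φ (Multiplicative.ofAdd ((b i : Fin m →₀ ℤ))) ∈ Φ.range := ⟨_, rfl⟩
      rw [hA] at h8
      obtain ⟨x, hxR, hπx⟩ := h8
      have h9 : θ x = 1 := by
        have h10 : Lmap ((b i : Fin m →₀ ℤ)) = 0 := (b i).2
        rw [hLapp] at h10
        have : θ x = θbar (Φ (Multiplicative.ofAdd ((b i : Fin m →₀ ℤ)))) := by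
          rw [← hπx]; exact (hθbarπ x).symm
        rw [this]
        have := congrArg Multiplicative.ofAdd h10
        simpa using this
      have hxC : x ∈ ⁅(⊤ : Subgroup (FreeGroup (Fin t))), (⊤ : Subgroup (FreeGroup (Fin t)))⁆ := by
        have h12 : x ∈ MonoidHom.ker θ := h9
        rwa [hθker] at h12
      exact ⟨x, ⟨hxR, hxC⟩, hπx⟩
    · rintro q hq
      obtain ⟨x, ⟨hxR, hxC⟩, rfl⟩ := hq
      have : π x ∈ Φ.range := by rw [hA]; exact Subgroup.mem_map_of_mem π hxR
      obtain ⟨dm, hdm⟩ := this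
      have hdK : Multiplicative.toAdd dm ∈ K := by
        show Lmap (Multiplicative.toAdd dm) = 0
        rw [hLapp]
        have h11 : θ x = 1 := by
          have h13 : x ∈ MonoidHom.ker θ := by rwa [hθker]
          exact h13
        have : θbar (Φ (Multiplicative.ofAdd (Multiplicative.toAdd dm))) = 1 := by
          rw [show Multiplicative.ofAdd (Multiplicative.toAdd dm) = dm from rfl, hdm]
          rw [show θbar (π x) = θ x from hθbarπ x, h11]
        rw [this]; rfl
      have := hclosK _ hdK
      rwa [show Multiplicative.ofAdd (Multiplicative.toAdd dm) = dm from rfl, hdm] at this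
end

section
/- Let G be a finite group given by a presentation F/R with F free of rank t and R the normal closure of m elements. Then d(M(G)) ≤ m - t, where M(G) = (R ∩ [F,F])/[R,F] is the Schur multiplier and d denotes the minimal number of generators. -/
open Multiplicative Subgroup
open scoped commutatorElement

/-- The abelianization map from the free group to `ℤ^t` (written multiplicatively). -/
private noncomputable def fgAb (t : ℕ) :
    FreeGroup (Fin t) →* Multiplicative (Fin t →₀ ℤ) :=
  FreeGroup.lift fun i => ofAdd (Finsupp.single i 1)

private lemma fgAb_of {t : ℕ} (i : Fin t) :
    fgAb t (FreeGroup.of i) = ofAdd (Finsupp.single i 1) :=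
  FreeGroup.lift_apply_of

private lemma ofAdd_single_zpow {t : ℕ} (a : Fin t) (b : ℤ) :
    (ofAdd (Finsupp.single a (1 : ℤ))) ^ b = ofAdd (Finsupp.single a b) := by
  apply Multiplicative.toAdd.injective
  simp [toAdd_zpow]

private lemma fgAb_surjective (t : ℕ) : Function.Surjective (fgAb t) := by
  intro y
  obtain ⟨x, rfl⟩ : ∃ x, ofAdd x = y := ⟨y.toAdd, rfl⟩
  induction x using Finsupp.induction with
  | zero => exact ⟨1, map_one _⟩
  | single_add a b f _ _ ih =>
    obtain ⟨w, hw⟩ := ih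
    refine ⟨FreeGroup.of a ^ b * w, ?_⟩
    rw [map_mul, map_zpow, fgAb_of, hw, ofAdd_add, ofAdd_single_zpow]

private lemma fgAb_ker (t : ℕ) : (fgAb t).ker = commutator (FreeGroup (Fin t)) := by
  refine le_antisymm ?_ (Abelianization.commutator_subset_ker _)
  have hψ : ∀ x : FreeGroup (Fin t),
      Abelianization.lift (fgAb t) (Abelianization.of x) = fgAb t x := fun x =>
    Abelianization.lift_apply_of _ _
  set h : Multiplicative (Fin t →₀ ℤ) →* Abelianization (FreeGroup (Fin t)) :=
    AddMonoidHom.toMultiplicativeLeft (Finsupp.liftAddHom fun i =>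
      zmultiplesHom _ (Additive.ofMul (Abelianization.of (FreeGroup.of i)))) with hh
  have hcomp : h.comp (Abelianization.lift (fgAb t)) = MonoidHom.id _ := by
    apply Abelianization.hom_ext
    apply FreeGroup.ext_hom
    intro i
    show h (Abelianization.lift (fgAb t) (Abelianization.of (FreeGroup.of i)))
        = Abelianization.of (FreeGroup.of i)
    rw [hψ, fgAb_of, hh]
    show (Finsupp.liftAddHom (fun i =>
      zmultiplesHom _ (Additive.ofMul (Abelianization.of (FreeGroup.of i))))
        (Finsupp.single i 1)).toMul = _
    rw [Finsupp.liftAddHom_apply_single]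
    simp [zmultiplesHom_apply]
  have hinj : Function.Injective (Abelianization.lift (fgAb t)) := by
    intro x y hxy
    have hx := DFunLike.congr_fun hcomp x
    have hy := DFunLike.congr_fun hcomp y
    simp only [MonoidHom.comp_apply, MonoidHom.id_apply] at hx hy
    rw [← hx, ← hy, hxy]
  intro x hx
  have h1 : Abelianization.lift (fgAb t) (Abelianization.of x) = 1 := by
    rw [hψ]; exact hx
  have h2 : Abelianization.of x = 1 := hinj (by rw [h1, map_one])
  exact (QuotientGroup.eq_one_iff x).mp h2

private lemma noncommProd_eq_of_single {ι G : Type*} [Monoid G] (i : ι) (f : ι → G)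
    (hone : ∀ j, j ≠ i → f j = 1) :
    ∀ (s : Finset ι) (comm), i ∈ s → s.noncommProd f comm = f i := by
  intro s
  induction s using Finset.cons_induction with
  | empty => intro comm hi; cases hi
  | cons a s ha ih =>
    intro comm hi
    rw [Finset.noncommProd_cons]
    rcases eq_or_ne a i with rfl | hne
    · rw [Finset.noncommProd_eq_pow_card _ _ _ 1
        (fun j hj => hone j (fun h => ha (h ▸ hj))), one_pow, mul_one]
    · rw [hone a hne, one_mul]
      refine ih _ ?_
      rcases Finset.mem_cons.mp hi with h | h
      · exact absurd h.symm hne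
      · exact h

/-- Let a finite group `G` be presented as `F/R` with `F` free of rank `t` and
`R` the normal closure of `m` elements.  Then `d(M(G)) ≤ m - t`, where
`M(G) = (R ∩ [F,F])/[R,F]` is the Schur multiplier (realized as the image of
`R ∩ [F,F]` in `F/[R,F]`) and `d` is the minimal number of generators:
i.e. `M(G)` admits a generating set of at most `m - t` elements. -/
theorem schur_multiplier_d_le_def (t m : ℕ)
    (S : Finset (FreeGroup (Fin t))) (hcard : S.card = m)
    (R : Subgroup (FreeGroup (Fin t))) [R.Normal]
    (hR : R = Subgroup.normalClosure (S : Set (FreeGroup (Fin t))))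
    (hfin : Finite (FreeGroup (Fin t) ⧸ R)) :
    ∃ T : Finset (FreeGroup (Fin t) ⧸ ⁅R, (⊤ : Subgroup (FreeGroup (Fin t)))⁆),
      T.card ≤ m - t ∧
      Subgroup.closure (T : Set (FreeGroup (Fin t) ⧸ ⁅R, (⊤ : Subgroup (FreeGroup (Fin t)))⁆)) =
        (R ⊓ ⁅(⊤ : Subgroup (FreeGroup (Fin t))), ⊤⁆).map
          (QuotientGroup.mk' ⁅R, (⊤ : Subgroup (FreeGroup (Fin t)))⁆) := by
  classical
  -- enumerate the relators
  obtain ⟨σ, hσ⟩ : ∃ σ : Fin m → FreeGroup (Fin t),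
      Set.range σ = (S : Set (FreeGroup (Fin t))) := by
    subst hcard
    refine ⟨fun i => ((S.equivFin.symm i : S) : FreeGroup (Fin t)), ?_⟩
    show Set.range (Subtype.val ∘ S.equivFin.symm) = _
    rw [Set.range_comp, Equiv.range_eq_univ, Set.image_univ]
    ext x; simp
  have hσR : ∀ i, σ i ∈ R := fun i => by
    rw [hR]
    exact Subgroup.subset_normalClosure (by rw [← hσ]; exact Set.mem_range_self i)
  set φ := QuotientGroup.mk' ⁅R, (⊤ : Subgroup (FreeGroup (Fin t)))⁆ with hφ
  have hφsurj : Function.Surjective φ := QuotientGroup.mk'_surjective _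
  -- conjugates of elements of R are congruent mod [R,F]
  have hconj : ∀ x ∈ R, ∀ g₀ : FreeGroup (Fin t), φ (g₀ * x * g₀⁻¹) = φ x := by
    intro x hx g₀
    rw [QuotientGroup.mk'_eq_mk']
    refine ⟨⁅g₀, x⁻¹⁆, ?_, by rw [commutatorElement_def]; group⟩
    rw [Subgroup.commutator_comm]
    exact Subgroup.commutator_mem_commutator (Subgroup.mem_top _) (Subgroup.inv_mem _ hx)
  -- elements of R commute mod [R,F]
  have hcommR : ∀ x ∈ R, ∀ y ∈ R, φ x * φ y = φ y * φ x := by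
    intro x hx y hy
    rw [← map_mul, ← map_mul, QuotientGroup.mk'_eq_mk']
    refine ⟨⁅y⁻¹, x⁻¹⁆, ?_, by rw [commutatorElement_def]; group⟩
    exact Subgroup.commutator_mem_commutator (Subgroup.inv_mem _ hy) (Subgroup.mem_top _)
  -- the image of R in F/[R,F] is generated by the images of the relators
  have hA : R.map φ = Subgroup.closure (Set.range (φ ∘ σ)) := by
    have h1 : R.map φ = Subgroup.normalClosure (φ '' (S : Set (FreeGroup (Fin t)))) :=
      (congrArg (Subgroup.map φ) hR).trans (Subgroup.map_normalClosure _ _ hφsurj)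
    have himg : φ '' (S : Set (FreeGroup (Fin t))) = Set.range (φ ∘ σ) := by
      rw [← hσ, ← Set.range_comp]
    rw [h1, himg]
    haveI hnor : (Subgroup.closure (Set.range (φ ∘ σ))).Normal := by
      constructor
      intro n hn g
      obtain ⟨g₀, rfl⟩ := hφsurj g
      induction hn using Subgroup.closure_induction with
      | mem x hx =>
        obtain ⟨i, rfl⟩ := hx
        have : φ g₀ * (φ ∘ σ) i * (φ g₀)⁻¹ = φ (g₀ * σ i * g₀⁻¹) := by
          simp [Function.comp]
        rw [this, hconj _ (hσR i) g₀]
        exact Subgroup.subset_closure (Set.mem_range_self i)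
      | one => simpa using Subgroup.one_mem _
      | mul x y hx hy ihx ihy =>
        have : φ g₀ * (x * y) * (φ g₀)⁻¹
            = (φ g₀ * x * (φ g₀)⁻¹) * (φ g₀ * y * (φ g₀)⁻¹) := by group
        rw [this]; exact Subgroup.mul_mem _ ihx ihy
      | inv x hx ihx =>
        have : φ g₀ * x⁻¹ * (φ g₀)⁻¹ = (φ g₀ * x * (φ g₀)⁻¹)⁻¹ := by group
        rw [this]; exact Subgroup.inv_mem _ ihx
    exact le_antisymm (Subgroup.normalClosure_le_normal Subgroup.subset_closure)
      Subgroup.closure_le_normalClosure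
    -- pairwise commuting images of the relators
  have hcomm : ∀ i j : Fin m, Commute (φ (σ i)) (φ (σ j)) := fun i j =>
    hcommR _ (hσR i) _ (hσR j)
  set Φf : (Fin m → ℤ) → (FreeGroup (Fin t) ⧸ ⁅R, (⊤ : Subgroup (FreeGroup (Fin t)))⁆) :=
    fun v => Finset.univ.noncommProd (fun i => φ (σ i) ^ v i)
      (show (↑(Finset.univ : Finset (Fin m)) : Set (Fin m)).Pairwise
        (Function.onFun Commute fun i => φ (σ i) ^ v i) from
        fun i _ j _ _ => (hcomm i j).zpow_zpow _ _) with hΦf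
  have hΦadd : ∀ v w : Fin m → ℤ, Φf (v + w) = Φf v * Φf w := by
    intro v w
    have hd := Finset.noncommProd_mul_distrib (s := (Finset.univ : Finset (Fin m)))
      (fun i => φ (σ i) ^ v i) (fun i => φ (σ i) ^ w i)
      (fun i _ j _ _ => (hcomm i j).zpow_zpow _ _)
      (fun i _ j _ _ => (hcomm i j).zpow_zpow _ _)
      (fun i _ j _ _ => (hcomm i j).zpow_zpow _ _)
    have he : Φf (v + w) = Finset.univ.noncommProd
        ((fun i => φ (σ i) ^ v i) * fun i => φ (σ i) ^ w i)
        (Finset.noncommProd_mul_distrib_aux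
          (fun i _ j _ _ => (hcomm i j).zpow_zpow _ _)
          (fun i _ j _ _ => (hcomm i j).zpow_zpow _ _)
          (fun i _ j _ _ => (hcomm i j).zpow_zpow _ _)) := by
      simp only [hΦf]
      exact Finset.noncommProd_congr rfl
        (fun i _ => by rw [Pi.add_apply, zpow_add]; rfl)
        (fun i _ j _ _ => (hcomm i j).zpow_zpow _ _)
    exact he.trans hd
  set Φ : Multiplicative (Fin m → ℤ) →*
      (FreeGroup (Fin t) ⧸ ⁅R, (⊤ : Subgroup (FreeGroup (Fin t)))⁆) :=
    MonoidHom.mk' (fun v => Φf v.toAdd) (fun v w => hΦadd v.toAdd w.toAdd) with hΦdef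
  -- the induced map to ℤ^t
  have hKker : ⁅R, (⊤ : Subgroup (FreeGroup (Fin t)))⁆ ≤ (fgAb t).ker := by
    rw [fgAb_ker, _root_.commutator_def]
    exact Subgroup.commutator_mono le_top le_rfl
  set g : (FreeGroup (Fin t) ⧸ ⁅R, (⊤ : Subgroup (FreeGroup (Fin t)))⁆) →*
      Multiplicative (Fin t →₀ ℤ) := QuotientGroup.lift _ (fgAb t) hKker with hgdef
  have hgφ : ∀ x, g (φ x) = fgAb t x := fun x => rfl
  set c : Fin m → (Fin t →₀ ℤ) := fun i => (fgAb t (σ i)).toAdd with hc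
  set π : (Fin m → ℤ) →ₗ[ℤ] (Fin t →₀ ℤ) := Fintype.linearCombination ℤ c with hπ
  have hgΦ : ∀ v : Fin m → ℤ, g (Φ (ofAdd v)) = ofAdd (π v) := by
    intro v
    show g (Φf v) = ofAdd (π v)
    simp only [hΦf]
    rw [Finset.map_noncommProd _ _ _ g, Finset.noncommProd_eq_prod]
    apply Multiplicative.toAdd.injective
    rw [toAdd_prod, toAdd_ofAdd, hπ, Fintype.linearCombination_apply]
    refine Finset.sum_congr rfl fun i _ => ?_
    rw [map_zpow, toAdd_zpow]
    rfl
  have hΦsingle : ∀ i, Φ (ofAdd (Pi.single i 1)) = φ (σ i) := by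
    intro i
    show Φf (Pi.single i 1) = φ (σ i)
    simp only [hΦf]
    rw [noncommProd_eq_of_single i _
      (fun j hj => by rw [Pi.single_eq_of_ne hj, zpow_zero]) _ _ (Finset.mem_univ i)]
    simp
  have hΦA : ∀ x, Φ x ∈ R.map φ := by
    intro x
    show Φf x.toAdd ∈ R.map φ
    simp only [hΦf]
    exact Subgroup.noncommProd_mem _ _ fun i _ =>
      Subgroup.zpow_mem _ (Subgroup.mem_map_of_mem φ (hσR i)) _
  -- the two key characterizations of the Schur multiplier subgroup
  have hL1 : ∀ v : Fin m → ℤ, π v = 0 → Φ (ofAdd v) ∈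
      (R ⊓ ⁅(⊤ : Subgroup (FreeGroup (Fin t))), ⊤⁆).map φ := by
    intro v hv
    obtain ⟨r, hrR, hrq⟩ := hΦA (ofAdd v)
    have h1 : fgAb t r = 1 := by
      have h2 := hgΦ v
      rw [← hrq, hgφ, hv] at h2
      simpa using h2
    refine ⟨r, ⟨hrR, ?_⟩, hrq⟩
    rw [← _root_.commutator_def, ← fgAb_ker]
    exact h1
  have hL2 : ∀ q ∈ (R ⊓ ⁅(⊤ : Subgroup (FreeGroup (Fin t))), ⊤⁆).map φ,
      ∃ v : Fin m → ℤ, π v = 0 ∧ Φ (ofAdd v) = q := by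
    rintro q ⟨r, ⟨hrR, hrC⟩, rfl⟩
    have hqH : φ r ∈ Subgroup.closure (Set.range (φ ∘ σ)) := by
      rw [← hA]; exact ⟨r, hrR, rfl⟩
    have hex : ∀ x, x ∈ Subgroup.closure (Set.range (φ ∘ σ)) →
        ∃ v : Fin m → ℤ, Φ (ofAdd v) = x := by
      intro x hx
      induction hx using Subgroup.closure_induction with
      | mem x hx => obtain ⟨i, rfl⟩ := hx; exact ⟨Pi.single i 1, hΦsingle i⟩
      | one => exact ⟨0, by simpa using map_one Φ⟩
      | mul x y hx hy ihx ihy =>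
        obtain ⟨v, hv⟩ := ihx; obtain ⟨u, hu⟩ := ihy
        exact ⟨v + u, by rw [ofAdd_add, map_mul, hv, hu]⟩
      | inv x hx ihx =>
        obtain ⟨v, hv⟩ := ihx
        exact ⟨-v, by rw [ofAdd_neg, map_inv, hv]⟩
    obtain ⟨v, hv⟩ := hex _ hqH
    refine ⟨v, ?_, hv⟩
    have h1 : fgAb t r = 1 := by
      have : r ∈ (fgAb t).ker := by rw [fgAb_ker, _root_.commutator_def]; exact hrC
      exact this
    have h2 := hgΦ v
    rw [hv, hgφ, h1] at h2
    have h3 : ofAdd (π v) = ofAdd (0 : Fin t →₀ ℤ) := by rw [← h2]; rfl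
    simpa using Multiplicative.ofAdd.injective h3
  -- the quotient of ℤ^t by the range of π is torsion
  have htor : Module.rank ℤ ((Fin t →₀ ℤ) ⧸ LinearMap.range π) = 0 := by
    rw [rank_eq_zero_iff]
    intro x
    obtain ⟨x, rfl⟩ := Submodule.Quotient.mk_surjective _ x
    obtain ⟨u, hu⟩ := fgAb_surjective t (ofAdd x)
    set n := orderOf (QuotientGroup.mk u : FreeGroup (Fin t) ⧸ R) with hn
    have hnpos : 0 < n := by
      haveI := hfin
      exact orderOf_pos _
    have hun : u ^ n ∈ R := by
      have h1 : ((QuotientGroup.mk u : FreeGroup (Fin t) ⧸ R)) ^ n = 1 := pow_orderOf_eq_one _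
      have h2 : (QuotientGroup.mk (u ^ n) : FreeGroup (Fin t) ⧸ R) = 1 := by
        rw [QuotientGroup.mk_pow]; exact h1
      exact (QuotientGroup.eq_one_iff _).mp h2
    have hfR : ∀ r ∈ R, (fgAb t r).toAdd ∈ LinearMap.range π := by
      have hcl : ∀ x, x ∈ Subgroup.closure (fgAb t '' (S : Set (FreeGroup (Fin t)))) →
          x.toAdd ∈ LinearMap.range π := by
        intro x hx
        induction hx using Subgroup.closure_induction with
        | mem x hx =>
          obtain ⟨s, hs, rfl⟩ := hx
          rw [← hσ] at hs
          obtain ⟨i, rfl⟩ := hs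
          refine ⟨Pi.single i 1, ?_⟩
          rw [hπ, Fintype.linearCombination_apply_single, one_smul]
        | one => simpa using Submodule.zero_mem (LinearMap.range π)
        | mul x y hx hy ihx ihy => rw [toAdd_mul]; exact Submodule.add_mem _ ihx ihy
        | inv x hx ihx => rw [toAdd_inv]; exact Submodule.neg_mem _ ihx
      intro r hr
      rw [hR] at hr
      refine hcl _ ?_
      have h3 : fgAb t r ∈
          (Subgroup.normalClosure (S : Set (FreeGroup (Fin t)))).map (fgAb t) :=
        ⟨r, hr, rfl⟩
      rw [Subgroup.map_normalClosure _ _ (fgAb_surjective t)] at h3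
      exact Subgroup.normalClosure_le_normal Subgroup.subset_closure h3
    refine ⟨(n : ℤ), by exact_mod_cast hnpos.ne', ?_⟩
    have h4 : (n : ℤ) • x = (fgAb t (u ^ n)).toAdd := by
      rw [map_pow, hu, toAdd_pow, toAdd_ofAdd, natCast_zsmul]
    rw [← Submodule.Quotient.mk_smul, Submodule.Quotient.mk_eq_zero, h4]
    exact hfR _ hun
  -- rank bookkeeping
  have hrange : Module.rank ℤ (LinearMap.range π) = t := by
    have h1 := Submodule.rank_quotient_add_rank (LinearMap.range π)
    rw [htor, zero_add, rank_finsupp_self'] at h1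
    simpa using h1
  obtain ⟨n, bker⟩ := Submodule.basisOfPid (Pi.basisFun ℤ (Fin m)) (LinearMap.ker π)
  have hrk : Module.rank ℤ (LinearMap.ker π) = n := by
    rw [← bker.mk_eq_rank'', Cardinal.mk_fin]
  have hmn : t + n = m := by
    have h2 := LinearMap.rank_range_add_rank_ker π
    rw [hrange, hrk, rank_fun'] at h2
    have h3 : ((t + n : ℕ) : Cardinal) = ((m : ℕ) : Cardinal) := by
      push_cast
      simpa using h2
    exact_mod_cast h3
  set w : Fin n → (Fin m → ℤ) := fun j => (bker j : Fin m → ℤ) with hwdef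
  have hwker : ∀ j, π (w j) = 0 := fun j => LinearMap.mem_ker.mp (bker j).2
  refine ⟨Finset.image (fun j => Φ (ofAdd (w j))) Finset.univ, ?_, ?_⟩
  · calc (Finset.image (fun j => Φ (ofAdd (w j))) Finset.univ).card
        ≤ Finset.univ.card := Finset.card_image_le
      _ = n := by simp
      _ ≤ m - t := by omega
  · have hTset : ((Finset.image (fun j => Φ (ofAdd (w j))) Finset.univ :
        Finset (FreeGroup (Fin t) ⧸ ⁅R, (⊤ : Subgroup (FreeGroup (Fin t)))⁆)) :
        Set (FreeGroup (Fin t) ⧸ ⁅R, (⊤ : Subgroup (FreeGroup (Fin t)))⁆))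
        = Set.range (fun j => Φ (ofAdd (w j))) := by
      rw [Finset.coe_image, Finset.coe_univ, Set.image_univ]
    rw [hTset]
    apply le_antisymm
    · rw [Subgroup.closure_le]
      rintro x ⟨j, rfl⟩
      exact hL1 _ (hwker j)
    · intro q hq
      obtain ⟨v, hv0, rfl⟩ := hL2 q hq
      have hvker : v ∈ Submodule.span ℤ (Set.range w) := by
        have hspan : Submodule.span ℤ (Set.range w) = LinearMap.ker π := by
          have h5 : Set.range w = (LinearMap.ker π).subtype '' Set.range bker := by
            rw [← Set.range_comp]; rfl
          rw [h5, Submodule.span_image, Module.Basis.span_eq, Submodule.map_top,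
            Submodule.range_subtype]
        rw [hspan]
        exact LinearMap.mem_ker.mpr hv0
      clear hv0 hq
      induction hvker using Submodule.span_induction with
      | mem x hx =>
        obtain ⟨j, rfl⟩ := hx
        exact Subgroup.subset_closure ⟨j, rfl⟩
      | zero => simpa using Subgroup.one_mem _
      | add x y hx hy ihx ihy =>
        rw [ofAdd_add, map_mul]
        exact Subgroup.mul_mem _ ihx ihy
      | smul z x hx ihx =>
        have hz : ofAdd (z • x) = (ofAdd x) ^ z := by
          apply Multiplicative.toAdd.injective
          rw [toAdd_zpow, toAdd_ofAdd, toAdd_ofAdd]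
        rw [hz, map_zpow]
        exact Subgroup.zpow_mem _ ihx z
end

section
/- The iterated wreath product (C₂ ≀ C₂) ≀ C₂ admits the presentation ⟨x, y, z | x², y², z², [x, x^y], [y, y^z], [x, x^z], [x, y^z], [y, x^z]⟩. -/
namespace Wr

variable (G H : Type*) [Group G] [Group H]

/-- The regular action of `H` on the base group `H → G` of the wreath product. -/
def wrAction : H →* MulAut (H → G) where
  toFun h :=
    { toFun := fun f x => f (h⁻¹ * x)
      invFun := fun f x => f (h * x)
      left_inv := fun f => by funext x; simp
      right_inv := fun f => by funext x; simp
      map_mul' := fun f g => rfl }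
  map_one' := by ext f x; simp
  map_mul' := fun h₁ h₂ => by ext f x; simp [mul_assoc]

/-- The regular wreath product `G ≀ H = (H → G) ⋊ H`. -/
def Wreath := (H → G) ⋊[wrAction G H] H

instance : Group (Wreath G H) := SemidirectProduct.instGroup

/-- The cyclic group of order 2. -/
abbrev C2 := Multiplicative (ZMod 2)

end Wr

namespace Stmt8
open Wr
open scoped commutatorElement

/-- Generators `x, y, z` of the free group on three letters. -/
def x : FreeGroup (Fin 3) := FreeGroup.of 0
def y : FreeGroup (Fin 3) := FreeGroup.of 1
def z : FreeGroup (Fin 3) := FreeGroup.of 2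

/-- The relators `x², y², z², [x,x^y], [y,y^z], [x,x^z], [x,y^z], [y,x^z]`. -/
def rels : Set (FreeGroup (Fin 3)) :=
  { x ^ 2, y ^ 2, z ^ 2,
    ⁅x, y⁻¹ * x * y⁆, ⁅y, z⁻¹ * y * z⁆, ⁅x, z⁻¹ * x * z⁆,
    ⁅x, z⁻¹ * y * z⁆, ⁅y, z⁻¹ * x * z⁆ }

section Aux
open SemidirectProduct

/-- The nontrivial element of `C2`. -/
def tt : C2 := Multiplicative.ofAdd 1

lemma c2cases (g : C2) : g = 1 ∨ g = tt := by revert g; decide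

variable {P : Type*} [Group P]

/-- Homomorphism from `C2` to any group, given an element of order dividing 2. -/
def c2hom (p : P) (hp : p * p = 1) : C2 →* P where
  toFun g := if g = 1 then 1 else p
  map_one' := if_pos rfl
  map_mul' a b := by
    show (if a * b = 1 then (1:P) else p)
        = (if a = 1 then (1:P) else p) * (if b = 1 then (1:P) else p)
    rcases c2cases a with rfl | rfl <;> rcases c2cases b with rfl | rfl
    · rw [if_pos (show (1 * 1 : C2) = 1 by decide), if_pos rfl, one_mul]
    · rw [if_neg (show ¬ ((1 * tt : C2) = 1) by decide), if_pos rfl,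
        if_neg (show ¬ (tt = (1 : C2)) by decide), one_mul]
    · rw [if_neg (show ¬ ((tt * 1 : C2) = 1) by decide), if_pos rfl,
        if_neg (show ¬ (tt = (1 : C2)) by decide), mul_one]
    · rw [if_pos (show (tt * tt : C2) = 1 by decide),
        if_neg (show ¬ (tt = (1 : C2)) by decide)]
      exact hp.symm

@[simp] lemma c2hom_tt (p : P) (hp : p * p = 1) : c2hom p hp tt = p := by
  simp only [c2hom, MonoidHom.coe_mk, OneHom.coe_mk]
  rw [if_neg (show ¬ (tt = (1 : C2)) by decide)]

/-- Homomorphism out of a binary power `C2 → M`, given two homs with commuting ranges. -/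
def piHom {M : Type*} [Group M] (A B : M →* P)
    (hc : ∀ m m', Commute (A m) (B m')) : (C2 → M) →* P where
  toFun f := A (f 1) * B (f tt)
  map_one' := by simp
  map_mul' f g := by
    simp only [Pi.mul_apply, map_mul, mul_assoc]
    congr 1
    rw [← mul_assoc, (hc (g 1) (f tt)).eq, mul_assoc]

@[simp] lemma piHom_apply {M : Type*} [Group M] (A B : M →* P)
    (hc : ∀ m m', Commute (A m) (B m')) (f : C2 → M) :
    piHom A B hc f = A (f 1) * B (f tt) := rfl

lemma commute_of_closure {M : Type*} [Group M] (A B : M →* P) (S : Set M)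
    (hS : Subgroup.closure S = ⊤) (h : ∀ s ∈ S, ∀ u ∈ S, Commute (A s) (B u)) :
    ∀ m m', Commute (A m) (B m') := by
  have step1 : ∀ m, ∀ u ∈ S, Commute (A m) (B u) := by
    intro m
    have hmem : m ∈ Subgroup.closure S := by rw [hS]; trivial
    have key : m ∈ (Subgroup.centralizer (B '' S)).comap A := by
      refine (Subgroup.closure_le _).mpr (fun s hs => ?_) hmem
      simp only [SetLike.mem_coe, Subgroup.mem_comap, Subgroup.mem_centralizer_iff]
      rintro p ⟨u, hu, rfl⟩
      exact (h s hs u hu).symm.eq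
    simp only [Subgroup.mem_comap, Subgroup.mem_centralizer_iff] at key
    intro u hu
    have h' : B u * A m = A m * B u := key (B u) ⟨u, hu, rfl⟩
    exact h'.symm
  intro m m'
  have hmem : m' ∈ Subgroup.closure S := by rw [hS]; trivial
  have key : m' ∈ (Subgroup.centralizer (Set.range A)).comap B := by
    refine (Subgroup.closure_le _).mpr (fun u hu => ?_) hmem
    simp only [SetLike.mem_coe, Subgroup.mem_comap, Subgroup.mem_centralizer_iff]
    rintro p ⟨n, rfl⟩
    exact (step1 n u hu).eq
  simp only [Subgroup.mem_comap, Subgroup.mem_centralizer_iff] at key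
  exact key (A m) ⟨m, rfl⟩

lemma wrAction_apply {G H : Type*} [Group G] [Group H] (h : H) (f : H → G) (x : H) :
    (wrAction G H h) f x = f (h⁻¹ * x) := rfl

variable {M : Type*} [Group M]

/-- Lift a hom `A : M →* P` together with an order-2 element `w` to a hom `M ≀ C2 →* P`,
provided the range of `A` commutes with its `w`-conjugate. -/
def wreathLift (A : M →* P) (w : P) (hw : w * w = 1)
    (hc : ∀ m m', Commute (A m) (w * A m' * w⁻¹)) : Wreath M C2 →* P :=
  SemidirectProduct.lift
    (piHom A ((MulAut.conj w).toMonoidHom.comp A)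
      (fun m m' => by simpa using hc m m'))
    (c2hom w hw)
    (by
      have hwinv : w⁻¹ = w := inv_eq_of_mul_eq_one_right hw
      intro g
      rcases c2cases g with rfl | rfl <;> ext f
      · simp
      · simp only [MonoidHom.comp_apply, MulEquiv.coe_toMonoidHom, MulAut.conj_apply,
          piHom_apply]
        have h1 : (wrAction M C2 tt) f 1 = f tt := by
          rw [wrAction_apply, (show (tt⁻¹ * 1 : C2) = tt by decide)]
        have h2 : (wrAction M C2 tt) f tt = f 1 := by
          rw [wrAction_apply, (show (tt⁻¹ * tt : C2) = 1 by decide)]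
        rw [h1, h2, c2hom_tt, hwinv]
        have hcc := (hc (f 1) (f tt)).eq
        rw [hwinv] at hcc
        calc A (f tt) * (w * A (f 1) * w) = A (f tt) * w * A (f 1) * w := by
              simp [mul_assoc]
          _ = w * (A (f 1) * (w * A (f tt) * w)) * w := by
              rw [hcc]
              have h3 : w * (w * A (f tt) * w * A (f 1)) * w
                  = (w * w) * A (f tt) * w * A (f 1) * w := by simp [mul_assoc]
              rw [h3, hw, one_mul])

@[simp] lemma wreathLift_inl_single (A : M →* P) (w : P) (hw : w * w = 1)
    (hc : ∀ m m', Commute (A m) (w * A m' * w⁻¹)) (m : M) :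
    wreathLift A w hw hc (SemidirectProduct.inl (Pi.mulSingle 1 m)) = A m := by
  have h1 : wreathLift A w hw hc (SemidirectProduct.inl (Pi.mulSingle 1 m))
      = piHom A ((MulAut.conj w).toMonoidHom.comp A)
          (fun m m' => by simpa using hc m m') (Pi.mulSingle 1 m) :=
    SemidirectProduct.lift_inl _ _ _ _
  rw [h1, piHom_apply, Pi.mulSingle_eq_same,
    Pi.mulSingle_eq_of_ne (show tt ≠ 1 by decide)]
  simp

@[simp] lemma wreathLift_inr_tt (A : M →* P) (w : P) (hw : w * w = 1)
    (hc : ∀ m m', Commute (A m) (w * A m' * w⁻¹)) :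
    wreathLift A w hw hc (SemidirectProduct.inr tt) = w := by
  have h1 : wreathLift A w hw hc (SemidirectProduct.inr tt) = c2hom w hw tt :=
    SemidirectProduct.lift_inr _ _ _ _
  rw [h1, c2hom_tt]

end Aux
section Main
open SemidirectProduct

abbrev G1 := Wreath C2 C2
abbrev W := Wreath (Wreath C2 C2) C2

instance : DecidableEq G1 := fun u v =>
  decidable_of_iff (u.left = v.left ∧ u.right = v.right)
    ⟨fun ⟨h1, h2⟩ => SemidirectProduct.ext h1 h2, fun h => by subst h; exact ⟨rfl, rfl⟩⟩

instance : DecidableEq W := fun u v =>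
  decidable_of_iff (u.left = v.left ∧ u.right = v.right)
    ⟨fun ⟨h1, h2⟩ => SemidirectProduct.ext h1 h2, fun h => by subst h; exact ⟨rfl, rfl⟩⟩

def a : G1 := SemidirectProduct.inl (Pi.mulSingle 1 tt)
def b : G1 := SemidirectProduct.inr tt

def X : W := SemidirectProduct.inl (Pi.mulSingle 1 a)
def Y : W := SemidirectProduct.inl (Pi.mulSingle 1 b)
def Z : W := SemidirectProduct.inr tt

lemma closure_ab : Subgroup.closure ({a, b} : Set G1) = ⊤ := by
  rw [Subgroup.eq_top_iff']
  intro g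
  set K := Subgroup.closure ({a, b} : Set G1) with hK
  have ha : a ∈ K := Subgroup.subset_closure (Set.mem_insert _ _)
  have hb : b ∈ K := Subgroup.subset_closure (Set.mem_insert_of_mem _ rfl)
  have hsingle1 : ∀ c : C2, (SemidirectProduct.inl (Pi.mulSingle 1 c) : G1) ∈ K := by
    intro c; rcases c2cases c with rfl | rfl
    · rw [Pi.mulSingle_one, map_one]; exact one_mem _
    · exact ha
  have hconj : ∀ c : C2, (SemidirectProduct.inl (Pi.mulSingle tt c) : G1) ∈ K := by
    intro c
    have he : (wrAction C2 C2 tt) (Pi.mulSingle 1 c) = Pi.mulSingle tt c := by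
      funext u; rcases c2cases u with rfl | rfl
      · rw [wrAction_apply, (show (tt⁻¹ * 1 : C2) = tt by decide),
          Pi.mulSingle_eq_of_ne (show tt ≠ 1 by decide),
          Pi.mulSingle_eq_of_ne (show (1 : C2) ≠ tt by decide)]
      · rw [wrAction_apply, (show (tt⁻¹ * tt : C2) = 1 by decide),
          Pi.mulSingle_eq_same, Pi.mulSingle_eq_same]
    have haut := SemidirectProduct.inl_aut (φ := wrAction C2 C2) tt (Pi.mulSingle 1 c)
    rw [he, (show (tt⁻¹ : C2) = tt by decide)] at haut
    rw [haut]
    exact mul_mem (mul_mem hb (hsingle1 c)) hb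
  have hleft : g.left = Pi.mulSingle (M := fun _ : C2 => C2) 1 (g.left 1)
      * Pi.mulSingle tt (g.left tt) := by
    funext u; rcases c2cases u with rfl | rfl
    · rw [Pi.mul_apply, Pi.mulSingle_eq_same,
        Pi.mulSingle_eq_of_ne (show (1 : C2) ≠ tt by decide), mul_one]
    · rw [Pi.mul_apply, Pi.mulSingle_eq_of_ne (show tt ≠ 1 by decide),
        Pi.mulSingle_eq_same, one_mul]
  have hg : g = SemidirectProduct.inl g.left * SemidirectProduct.inr g.right :=
    (SemidirectProduct.inl_left_mul_inr_right g).symm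
  rw [hg, hleft, map_mul]
  refine mul_mem (mul_mem (hsingle1 _) (hconj _)) ?_
  rcases c2cases g.right with h | h <;> rw [h]
  · rw [map_one]; exact one_mem _
  · exact hb

def j : G1 →* W := SemidirectProduct.inl.comp (MonoidHom.mulSingle (fun _ : C2 => G1) 1)

lemma closure_XYZ : Subgroup.closure ({X, Y, Z} : Set W) = ⊤ := by
  rw [Subgroup.eq_top_iff']
  intro g
  set K := Subgroup.closure ({X, Y, Z} : Set W) with hK
  have hZ : Z ∈ K := Subgroup.subset_closure (by right; right; rfl)
  have hsingle1 : ∀ c : G1, (SemidirectProduct.inl (Pi.mulSingle 1 c) : W) ∈ K := by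
    intro c
    have h2 : j c ∈ Subgroup.map j (Subgroup.closure {a, b}) :=
      ⟨c, by rw [closure_ab]; trivial, rfl⟩
    rw [MonoidHom.map_closure] at h2
    have h3 : j '' {a, b} ⊆ ({X, Y, Z} : Set W) := by
      rintro _ ⟨s, hs, rfl⟩
      rcases hs with rfl | hs
      · left; rfl
      · rcases hs with rfl
        right; left; rfl
    exact Subgroup.closure_mono h3 h2
  have hconj : ∀ c : G1, (SemidirectProduct.inl (Pi.mulSingle tt c) : W) ∈ K := by
    intro c
    have he : (wrAction G1 C2 tt) (Pi.mulSingle 1 c) = Pi.mulSingle tt c := by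
      funext u; rcases c2cases u with rfl | rfl
      · rw [wrAction_apply, (show (tt⁻¹ * 1 : C2) = tt by decide),
          Pi.mulSingle_eq_of_ne (show tt ≠ 1 by decide),
          Pi.mulSingle_eq_of_ne (show (1 : C2) ≠ tt by decide)]
      · rw [wrAction_apply, (show (tt⁻¹ * tt : C2) = 1 by decide),
          Pi.mulSingle_eq_same, Pi.mulSingle_eq_same]
    have haut := SemidirectProduct.inl_aut (φ := wrAction G1 C2) tt (Pi.mulSingle 1 c)
    rw [he, (show (tt⁻¹ : C2) = tt by decide)] at haut
    rw [haut]
    exact mul_mem (mul_mem hZ (hsingle1 c)) hZ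
  have hleft : g.left = Pi.mulSingle (M := fun _ : C2 => G1) 1 (g.left 1)
      * Pi.mulSingle tt (g.left tt) := by
    funext u; rcases c2cases u with rfl | rfl
    · rw [Pi.mul_apply, Pi.mulSingle_eq_same,
        Pi.mulSingle_eq_of_ne (show (1 : C2) ≠ tt by decide), mul_one]
    · rw [Pi.mul_apply, Pi.mulSingle_eq_of_ne (show tt ≠ 1 by decide),
        Pi.mulSingle_eq_same, one_mul]
  have hg : g = SemidirectProduct.inl g.left * SemidirectProduct.inr g.right :=
    (SemidirectProduct.inl_left_mul_inr_right g).symm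
  rw [hg, hleft, map_mul]
  refine mul_mem (mul_mem (hsingle1 _) (hconj _)) ?_
  rcases c2cases g.right with h | h <;> rw [h]
  · rw [map_one]; exact one_mem _
  · exact hZ

end Main
section Pres
open SemidirectProduct

def mk3 : FreeGroup (Fin 3) →* PresentedGroup rels :=
  QuotientGroup.mk' _

lemma mk3_rel {r : FreeGroup (Fin 3)} (hr : r ∈ rels) : mk3 r = 1 :=
  (QuotientGroup.eq_one_iff r).mpr (Subgroup.subset_normalClosure hr)

def xp : PresentedGroup rels := PresentedGroup.of 0
def yp : PresentedGroup rels := PresentedGroup.of 1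
def zp : PresentedGroup rels := PresentedGroup.of 2

lemma mk3_x : mk3 x = xp := rfl
lemma mk3_y : mk3 y = yp := rfl
lemma mk3_z : mk3 z = zp := rfl

lemma hx2 : xp * xp = 1 := by
  have h := mk3_rel (show x ^ 2 ∈ rels by simp [rels])
  rwa [map_pow, mk3_x, pow_two] at h

lemma hy2 : yp * yp = 1 := by
  have h := mk3_rel (show y ^ 2 ∈ rels by simp [rels])
  rwa [map_pow, mk3_y, pow_two] at h

lemma hz2 : zp * zp = 1 := by
  have h := mk3_rel (show z ^ 2 ∈ rels by simp [rels])
  rwa [map_pow, mk3_z, pow_two] at h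

lemma ypinv : yp⁻¹ = yp := inv_eq_of_mul_eq_one_right hy2
lemma zpinv : zp⁻¹ = zp := inv_eq_of_mul_eq_one_right hz2

lemma comm_gen {u v : FreeGroup (Fin 3)} (h : ⁅u, v⁆ ∈ rels) :
    Commute (mk3 u) (mk3 v) := by
  have h1 := mk3_rel h
  rw [map_commutatorElement] at h1
  exact commutatorElement_eq_one_iff_commute.mp h1

lemma comm4 : Commute xp (yp * xp * yp) := by
  have h := comm_gen (show ⁅x, y⁻¹ * x * y⁆ ∈ rels by simp [rels])
  rw [map_mul, map_mul, map_inv, mk3_x, mk3_y, ypinv] at h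
  exact h

lemma comm5 : Commute yp (zp * yp * zp) := by
  have h := comm_gen (show ⁅y, z⁻¹ * y * z⁆ ∈ rels by simp [rels])
  rw [map_mul, map_mul, map_inv, mk3_y, mk3_z, zpinv] at h
  exact h

lemma comm6 : Commute xp (zp * xp * zp) := by
  have h := comm_gen (show ⁅x, z⁻¹ * x * z⁆ ∈ rels by simp [rels])
  rw [map_mul, map_mul, map_inv, mk3_x, mk3_z, zpinv] at h
  exact h

lemma comm7 : Commute xp (zp * yp * zp) := by
  have h := comm_gen (show ⁅x, z⁻¹ * y * z⁆ ∈ rels by simp [rels])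
  rw [map_mul, map_mul, map_inv, mk3_x, mk3_y, mk3_z, zpinv] at h
  exact h

lemma comm8 : Commute yp (zp * xp * zp) := by
  have h := comm_gen (show ⁅y, z⁻¹ * x * z⁆ ∈ rels by simp [rels])
  rw [map_mul, map_mul, map_inv, mk3_x, mk3_y, mk3_z, zpinv] at h
  exact h

def A0 : C2 →* PresentedGroup rels := c2hom xp hx2

@[simp] lemma A0_tt : A0 tt = xp := c2hom_tt _ _

lemma hcA : ∀ m m', Commute (A0 m) (yp * A0 m' * yp⁻¹) := by
  intro m m'
  rw [ypinv]
  rcases c2cases m with rfl | rfl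
  · rw [map_one]; exact Commute.one_left _
  · rcases c2cases m' with rfl | rfl
    · rw [map_one, mul_one, hy2]; exact Commute.one_right _
    · rw [A0_tt]; exact comm4

def AA : G1 →* PresentedGroup rels := wreathLift A0 yp hy2 hcA

lemma AA_a : AA a = xp := by
  have h := wreathLift_inl_single A0 yp hy2 hcA tt
  rw [A0_tt] at h
  exact h

lemma AA_b : AA b = yp := wreathLift_inr_tt A0 yp hy2 hcA

lemma hcB : ∀ m m', Commute (AA m) (zp * AA m' * zp⁻¹) := by
  have key := commute_of_closure AA ((MulAut.conj zp).toMonoidHom.comp AA)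
    {a, b} closure_ab ?_
  · intro m m'
    have h := key m m'
    simpa using h
  · intro s hs u hu
    rcases hs with rfl | hs
    · rcases hu with rfl | hu
      · simp only [MonoidHom.comp_apply, MulEquiv.coe_toMonoidHom, MulAut.conj_apply,
          AA_a, zpinv]
        exact comm6
      · rcases hu with rfl
        simp only [MonoidHom.comp_apply, MulEquiv.coe_toMonoidHom, MulAut.conj_apply,
          AA_a, AA_b, zpinv]
        exact comm7
    · rcases hs with rfl
      rcases hu with rfl | hu
      · simp only [MonoidHom.comp_apply, MulEquiv.coe_toMonoidHom, MulAut.conj_apply,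
          AA_a, AA_b, zpinv]
        exact comm8
      · rcases hu with rfl
        simp only [MonoidHom.comp_apply, MulEquiv.coe_toMonoidHom, MulAut.conj_apply,
          AA_b, zpinv]
        exact comm5

def Psi : W →* PresentedGroup rels := wreathLift AA zp hz2 hcB

lemma Psi_X : Psi X = xp := by
  have h := wreathLift_inl_single AA zp hz2 hcB a
  rw [AA_a] at h
  exact h

lemma Psi_Y : Psi Y = yp := by
  have h := wreathLift_inl_single AA zp hz2 hcB b
  rw [AA_b] at h
  exact h

lemma Psi_Z : Psi Z = zp := wreathLift_inr_tt AA zp hz2 hcB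

lemma hrels : ∀ r ∈ rels, FreeGroup.lift ![X, Y, Z] r = 1 := by
  intro r hr
  simp only [rels, Set.mem_insert_iff, Set.mem_singleton_iff] at hr
  rcases hr with rfl | rfl | rfl | rfl | rfl | rfl | rfl | rfl <;>
    · simp only [x, y, z, map_pow, map_commutatorElement, map_mul, map_inv,
        FreeGroup.lift_apply_of, Matrix.cons_val_zero, Matrix.cons_val_one, Matrix.head_cons,
        Matrix.cons_val_two, Matrix.tail_cons]
      decide

def phi : PresentedGroup rels →* W := PresentedGroup.toGroup hrels

lemma phi_x : phi xp = X := by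
  have h := PresentedGroup.toGroup.of hrels (x := (0 : Fin 3))
  exact h

lemma phi_y : phi yp = Y := by
  have h := PresentedGroup.toGroup.of hrels (x := (1 : Fin 3))
  exact h

lemma phi_z : phi zp = Z := by
  have h := PresentedGroup.toGroup.of hrels (x := (2 : Fin 3))
  exact h

lemma psi_phi : ∀ p, Psi (phi p) = p := by
  have h : Psi.comp phi = MonoidHom.id (PresentedGroup rels) := by
    apply PresentedGroup.ext
    intro i
    fin_cases i
    · show Psi (phi xp) = xp
      rw [phi_x, Psi_X]
    · show Psi (phi yp) = yp
      rw [phi_y, Psi_Y]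
    · show Psi (phi zp) = zp
      rw [phi_z, Psi_Z]
  intro p
  exact DFunLike.congr_fun h p

end Pres

/-- The iterated regular wreath product `(C₂ ≀ C₂) ≀ C₂` admits the presentation
`⟨x, y, z ∣ x², y², z², [x,x^y], [y,y^z], [x,x^z], [x,y^z], [y,x^z]⟩`. -/
theorem presentation_of_iterated_wreath :
    Nonempty (PresentedGroup rels ≃* Wreath (Wreath C2 C2) C2) := by
  have hinj : Function.Injective phi := Function.LeftInverse.injective psi_phi
  have hsurj : Function.Surjective phi := by
    rw [← MonoidHom.range_eq_top]
    rw [← top_le_iff, ← closure_XYZ, Subgroup.closure_le]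
    rintro w hw
    rcases hw with rfl | hw
    · exact ⟨xp, phi_x⟩
    · rcases hw with rfl | hw
      · exact ⟨yp, phi_y⟩
      · rcases hw with rfl
        exact ⟨zp, phi_z⟩
  exact ⟨MulEquiv.ofBijective phi ⟨hinj, hsurj⟩⟩

end Stmt8
end

section
/- Let F be the free group on {a,b,c,d} and let K be a normal subgroup containing a², b², c², d², and bcd. Then modulo [K,F], the element L = b²c²d²(bcd)⁻² satisfies L ≡ [d,c][d,b][c,b] and L² ∈ [K,F]. -/
open FreeGroup
open scoped commutatorElement

theorem aux_central_identities {G : Type*} [Group G] (b c d e : G) (he : e = b * c * d)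
    (hB : ∀ x : G, Commute (b ^ 2) x) (hC : ∀ x : G, Commute (c ^ 2) x)
    (hD : ∀ x : G, Commute (d ^ 2) x) (hE : ∀ x : G, Commute e x) :
    b ^ 2 * c ^ 2 * d ^ 2 * ((b * c * d) ^ 2)⁻¹ = ⁅d, c⁆ * ⁅d, b⁆ * ⁅c, b⁆ ∧
      (b ^ 2 * c ^ 2 * d ^ 2 * ((b * c * d) ^ 2)⁻¹) ^ 2 = 1 := by
  have hd2 : d = (b * c)⁻¹ * e := by rw [he]; group
  have h1 : (b * c) ^ 2 = e ^ 2 * (d ^ 2)⁻¹ := by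
    have h : (b * c) ^ 2 = e * (d⁻¹ * e) * d⁻¹ := by
      rw [he]; simp only [pow_two]; group
    rw [h, ← (hE d⁻¹).eq]; simp only [pow_two]; group
  have hBC : ∀ x : G, Commute ((b * c) ^ 2) x := by
    intro x
    rw [h1]
    exact Commute.mul_left ((hE x).pow_left 2) ((hD x).inv_left)
  have hcb : (c * b) ^ 2 = (b * c) ^ 2 := by
    have h2 : (c * b) ^ 2 = b⁻¹ * ((b * c) ^ 2 * b) := by
      simp only [pow_two]; group
    rw [h2, (hBC b).eq]; simp only [pow_two]; group
  have h3 : (b * c * d) ^ 2 = (b * c) ^ 2 * d ^ 2 := by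
    rw [h1, he]; simp only [pow_two]; group
  have hL1 : b ^ 2 * c ^ 2 * d ^ 2 * ((b * c * d) ^ 2)⁻¹
      = b ^ 2 * c ^ 2 * ((b * c) ^ 2)⁻¹ := by
    rw [h3]; simp only [pow_two]; group
  have hLa : b ^ 2 * c ^ 2 * ((b * c) ^ 2)⁻¹ = b * c * b⁻¹ * c⁻¹ := by
    rw [← hcb]
    have h4 : b ^ 2 * c ^ 2 * ((c * b) ^ 2)⁻¹
        = b ^ 2 * (c ^ 2 * b⁻¹) * (c⁻¹ * b⁻¹ * c⁻¹) := by
      simp only [pow_two]; group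
    rw [h4, (hC b⁻¹).eq]; simp only [pow_two]; group
  have hLb : b ^ 2 * c ^ 2 * ((b * c) ^ 2)⁻¹ = c * b⁻¹ * c⁻¹ * b := by
    have h5 : b ^ 2 * c ^ 2 * ((b * c) ^ 2)⁻¹
        = b ^ 2 * (c * b⁻¹ * c⁻¹ * b⁻¹) := by
      simp only [pow_two]; group
    rw [h5, (hB (c * b⁻¹ * c⁻¹ * b⁻¹)).eq]; simp only [pow_two]; group
  constructor
  · have f1 : ⁅d, c⁆ = c * b * c⁻¹ * b⁻¹ := by
      have h7 : ⁅d, c⁆ = (b * c)⁻¹ * (e * c) * (e⁻¹ * b) := by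
        rw [commutatorElement_def, hd2]; group
      have f1' : ⁅d, c⁆ = c⁻¹ * b⁻¹ * (c * b) := by
        rw [h7, (hE c).eq]; group
      calc ⁅d, c⁆ = c⁻¹ * b⁻¹ * (c * b) := f1'
        _ = (c ^ 2)⁻¹ * (c * ((b ^ 2)⁻¹ * (b * c * b))) := by
              simp only [pow_two]; group
        _ = (c ^ 2)⁻¹ * (c * ((b * c * b) * (b ^ 2)⁻¹)) := by
              rw [((hB (b * c * b)).inv_left).eq]
        _ = ((c ^ 2)⁻¹ * (c * b)) * (c * b * (b ^ 2)⁻¹) := by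
              simp only [pow_two]; group
        _ = ((c * b) * (c ^ 2)⁻¹) * (c * b * (b ^ 2)⁻¹) := by
              rw [((hC (c * b)).inv_left).eq]
        _ = c * b * c⁻¹ * b⁻¹ := by simp only [pow_two]; group
    have f2 : ⁅d, b⁆ = c * b⁻¹ * c⁻¹ * b := by
      have h8 : ⁅d, b⁆ = (b * c)⁻¹ * (e * b) * (e⁻¹ * (b * c) * b⁻¹) := by
        rw [commutatorElement_def, hd2]; group
      have f2' : ⁅d, b⁆ = c⁻¹ * (b * (c * b⁻¹)) := by
        rw [h8, (hE b).eq]; group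
      calc ⁅d, b⁆ = c⁻¹ * (b * (c * b⁻¹)) := f2'
        _ = (c ^ 2)⁻¹ * ((c * b) * ((c * b) * (b ^ 2)⁻¹)) := by
              simp only [pow_two]; group
        _ = (c ^ 2)⁻¹ * ((c * b) * ((b ^ 2)⁻¹ * (c * b))) := by
              rw [← ((hB (c * b)).inv_left).eq]
        _ = ((c ^ 2)⁻¹ * (c * b * (b ^ 2)⁻¹ * c)) * b := by
              simp only [pow_two]; group
        _ = ((c * b * (b ^ 2)⁻¹ * c) * (c ^ 2)⁻¹) * b := by
              rw [((hC (c * b * (b ^ 2)⁻¹ * c)).inv_left).eq]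
        _ = c * b⁻¹ * c⁻¹ * b := by simp only [pow_two]; group
    have f3 : ⁅c, b⁆ = c * b⁻¹ * c⁻¹ * b := by
      have v1 : ⁅c, b⁆ = c * (b ^ 2 * (b⁻¹ * c⁻¹ * b⁻¹)) := by
        rw [commutatorElement_def]; simp only [pow_two]; group
      rw [v1, (hB (b⁻¹ * c⁻¹ * b⁻¹)).eq]; simp only [pow_two]; group
    have g1 : ⁅d, c⁆ = (b ^ 2 * c ^ 2 * ((b * c) ^ 2)⁻¹)⁻¹ := by
      rw [f1, hLa]; group
    have g2 : ⁅d, b⁆ = b ^ 2 * c ^ 2 * ((b * c) ^ 2)⁻¹ := f2.trans hLb.symm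
    have g3 : ⁅c, b⁆ = b ^ 2 * c ^ 2 * ((b * c) ^ 2)⁻¹ := f3.trans hLb.symm
    rw [hL1, g1, g2, g3]; group
  · have hLaF := hL1.trans hLa
    have hLbF := hL1.trans hLb
    have hsq : (b ^ 2 * c ^ 2 * d ^ 2 * ((b * c * d) ^ 2)⁻¹) ^ 2
        = (b * c * b⁻¹ * c⁻¹) * (c * b⁻¹ * c⁻¹ * b) := by
      rw [pow_two]
      nth_rewrite 2 [hLbF]
      rw [hLaF]
    rw [hsq]
    have h6 : (b * c * b⁻¹ * c⁻¹) * (c * b⁻¹ * c⁻¹ * b)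
        = b * c * ((b ^ 2)⁻¹ * (c⁻¹ * b)) := by
      simp only [pow_two]; group
    rw [h6, ((hB (c⁻¹ * b)).inv_left).eq]; simp only [pow_two]; group


/-- Let `F` be the free group on `{a,b,c,d}` and `K` a normal subgroup
containing `a², b², c², d²` and `bcd`.  Then, with
`L = b²c²d²(bcd)⁻²`, we have `L ≡ [d,c][d,b][c,b]` modulo `[K,F]`,
and `L² ∈ [K,F]`. -/
theorem L_congr_and_L_sq_mem
    (K : Subgroup (FreeGroup (Fin 4))) (hK : K.Normal)
    (a b c d : FreeGroup (Fin 4))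
    (ha : a = of 0) (hb : b = of 1) (hc : c = of 2) (hd : d = of 3)
    (ha2 : a ^ 2 ∈ K) (hb2 : b ^ 2 ∈ K) (hc2 : c ^ 2 ∈ K) (hd2 : d ^ 2 ∈ K)
    (hbcd : b * c * d ∈ K) :
    (b ^ 2 * c ^ 2 * d ^ 2 * ((b * c * d) ^ 2)⁻¹) *
        (⁅d, c⁆ * ⁅d, b⁆ * ⁅c, b⁆)⁻¹ ∈ ⁅K, (⊤ : Subgroup (FreeGroup (Fin 4)))⁆ ∧
      (b ^ 2 * c ^ 2 * d ^ 2 * ((b * c * d) ^ 2)⁻¹) ^ 2 ∈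
        ⁅K, (⊤ : Subgroup (FreeGroup (Fin 4)))⁆ := by
  haveI := hK
  haveI : (⁅K, (⊤ : Subgroup (FreeGroup (Fin 4)))⁆).Normal := Subgroup.commutator_normal K ⊤
  set N : Subgroup (FreeGroup (Fin 4)) := ⁅K, (⊤ : Subgroup (FreeGroup (Fin 4)))⁆ with hN
  let φ : FreeGroup (Fin 4) →* FreeGroup (Fin 4) ⧸ N := QuotientGroup.mk' N
  have central : ∀ k ∈ K, ∀ y : FreeGroup (Fin 4) ⧸ N, Commute (φ k) y := by
    intro k hk y
    obtain ⟨x, rfl⟩ := QuotientGroup.mk'_surjective N y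
    rw [← commutatorElement_eq_one_iff_commute, ← map_commutatorElement]
    exact (QuotientGroup.eq_one_iff _).mpr
      (Subgroup.commutator_mem_commutator hk (Subgroup.mem_top x))
  have hB' : ∀ y, Commute ((φ b) ^ 2) y := fun y => by
    rw [← map_pow]; exact central _ hb2 y
  have hC' : ∀ y, Commute ((φ c) ^ 2) y := fun y => by
    rw [← map_pow]; exact central _ hc2 y
  have hD' : ∀ y, Commute ((φ d) ^ 2) y := fun y => by
    rw [← map_pow]; exact central _ hd2 y
  have hE' : ∀ y, Commute (φ (b * c * d)) y := fun y => central _ hbcd y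
  obtain ⟨h1, h2⟩ := aux_central_identities (φ b) (φ c) (φ d) (φ (b * c * d))
    (by rw [_root_.map_mul, _root_.map_mul]) hB' hC' hD' hE'
  constructor
  · apply (QuotientGroup.eq_one_iff _).mp
    show φ _ = 1
    simp only [_root_.map_mul, _root_.map_inv, map_pow, map_commutatorElement]
    rw [h1]
    group
  · apply (QuotientGroup.eq_one_iff _).mp
    show φ _ = 1
    simp only [_root_.map_mul, _root_.map_inv, map_pow]
    exact h2
end
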